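/- arXiv:quant-ph/0601155 — 3 statements merged into one kernel-verified Lean document; each statement's English description precedes it below -/
import Mathlib

section
/- For any A : ℕ×ℕ → 𝔻, n ∈ ℕ and l ≥ 1, the noise number s_n^A(l) = lim_{m→∞} M^(l)(X_m^1) − M^(l)(X_n^A) equals (π/√3)^l (1 − (3/π²) Σ_{k≠n} |A(n,k)|^l/(k−n)²) and is nonnegative. -/
open Real

lemma auxHasSum (n : ℕ) :
    ∃ S : ℝ, S ≤ π ^ 2 / 3 ∧
      HasSum (fun k : ℕ => if k = n then (0:ℝ) else 1 / ((k : ℝ) - n) ^ 2) S := by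
  set gp : ℕ → ℝ := fun k => if n < k then 1 / ((k : ℝ) - n) ^ 2 else 0 with hgp
  set gm : ℕ → ℝ := fun k => if k < n then 1 / ((k : ℝ) - n) ^ 2 else 0 with hgm
  have hp : HasSum gp (π ^ 2 / 6) := by
    have hinj : Function.Injective (fun j : ℕ => n + j) := fun a b h => by simpa using h
    have hcomp : (gp ∘ fun j : ℕ => n + j) = fun j : ℕ => (1 : ℝ) / (j : ℝ) ^ 2 := by
      funext j
      simp only [hgp, Function.comp]
      rcases Nat.eq_zero_or_pos j with h | h
      · subst h; simp
      · rw [if_pos (by omega)]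
        push_cast
        ring_nf
    refine (Function.Injective.hasSum_iff hinj ?_).1 ?_
    · intro k hk
      simp only [Set.mem_range] at hk
      have hkn : k < n := by
        by_contra h
        exact hk ⟨k - n, by omega⟩
      simp only [hgp]
      rw [if_neg (by omega)]
    · rw [hcomp]
      exact hasSum_zeta_two
  have hmsum : HasSum gm (∑ k ∈ Finset.range n, gm k) := by
    apply hasSum_sum_of_ne_finset_zero
    intro k hk
    simp only [Finset.mem_range, not_lt] at hk
    simp only [hgm]
    rw [if_neg (by omega)]
  have hmle : (∑ k ∈ Finset.range n, gm k) ≤ π ^ 2 / 6 := by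
    have h1 : (∑ k ∈ Finset.range n, gm k)
        = ∑ j ∈ Finset.Icc 1 n, (1 : ℝ) / (j : ℝ) ^ 2 := by
      apply Finset.sum_nbij' (fun k => n - k) (fun j => n - j)
      · intro k hk; simp only [Finset.mem_range] at hk; simp [Finset.mem_Icc]; omega
      · intro j hj; simp only [Finset.mem_Icc] at hj; simp [Finset.mem_range]; omega
      · intro k hk; simp only [Finset.mem_range] at hk; omega
      · intro j hj; simp only [Finset.mem_Icc] at hj; omega
      · intro k hk; simp only [Finset.mem_range] at hk
        simp only [hgm, if_pos hk]
        have : ((n - k : ℕ) : ℝ) = (n : ℝ) - k := by push_cast [Nat.cast_sub hk.le]; ring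
        rw [this]
        rw [show ((k:ℝ) - n)^2 = ((n:ℝ) - k)^2 by ring]
    rw [h1]
    have := Summable.sum_le_tsum (Finset.Icc 1 n) (fun j _ => by positivity) hasSum_zeta_two.summable
    calc _ ≤ _ := this
    _ = π ^ 2 / 6 := hasSum_zeta_two.tsum_eq
  refine ⟨π ^ 2 / 6 + ∑ k ∈ Finset.range n, gm k, by linarith, ?_⟩
  have := hp.add hmsum
  convert this using 1
  funext k
  simp only [hgp, hgm]
  rcases lt_trichotomy k n with h | h | h
  · rw [if_neg (by omega), if_neg (by omega), if_pos h]; ring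
  · subst h; simp
  · rw [if_neg (by omega), if_pos h, if_neg (by omega)]; ring


/-- The `l`-th moment of the random variable `X_n^A` associated with a matrix
`A : ℕ×ℕ → 𝔻`, with respect to the probability weights `p_n` on `ℕ`. -/
noncomputable def Ml (A : ℕ → ℕ → ℂ) (n l : ℕ) : ℝ :=
  ∑' k : ℕ,
    (if k = n then (0:ℝ) else (π / Real.sqrt 3) * ‖A n k‖) ^ l *
      (if k = n then 1 - ∑' m : ℕ, (if m = n then (0:ℝ) else 3 / (π ^ 2 * ((m : ℝ) - n) ^ 2))
       else 3 / (π ^ 2 * ((k : ℝ) - n) ^ 2))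

/-- For any `A : ℕ×ℕ → 𝔻`, `n ∈ ℕ` and `l ≥ 1`, the noise number
`s_n^A(l) = lim_m M^(l)(X_m^1) - M^(l)(X_n^A) = (π/√3)^l - M^(l)(X_n^A)` equals
`(π/√3)^l (1 - (3/π²) ∑_{k ≠ n} |A(n,k)|^l/(k-n)²)` and is nonnegative. -/
theorem stmt3 (A : ℕ → ℕ → ℂ) (hA : ∀ n m, ‖A n m‖ ≤ 1)
    (n l : ℕ) (hl : 1 ≤ l) :
    (π / Real.sqrt 3) ^ l - Ml A n l =
      (π / Real.sqrt 3) ^ l *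
        (1 - 3 / π ^ 2 *
          ∑' k : ℕ, (if k = n then (0:ℝ)
            else ‖A n k‖ ^ l / ((k : ℝ) - n) ^ 2)) ∧
    0 ≤ (π / Real.sqrt 3) ^ l - Ml A n l := by
  have hπ : (0:ℝ) < π := Real.pi_pos
  set c : ℝ := (π / Real.sqrt 3) ^ l with hc
  have hc0 : 0 ≤ c := by
    have h3 : (0:ℝ) < Real.sqrt 3 := Real.sqrt_pos.2 (by norm_num)
    positivity
  set tA : ℕ → ℝ := fun k =>
    if k = n then (0:ℝ) else ‖A n k‖ ^ l / ((k : ℝ) - n) ^ 2 with htA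
  have hMl : Ml A n l = c * (3 / π ^ 2) * ∑' k, tA k := by
    rw [Ml, ← tsum_mul_left]
    apply tsum_congr
    intro k
    by_cases hk : k = n
    · simp only [htA, if_pos hk]
      rw [zero_pow (by omega)]
      ring
    · simp only [htA, if_neg hk]
      have hkn : ((k:ℝ) - n) ≠ 0 := by
        have : (k:ℝ) ≠ n := by exact_mod_cast fun h => hk (Nat.cast_injective h)
        intro h; apply this; linarith
      rw [mul_pow, hc]
      field_simp
  obtain ⟨S, hS, hSsum⟩ := auxHasSum n
  have hterm : ∀ k, tA k ≤ (if k = n then (0:ℝ) else 1 / ((k : ℝ) - n) ^ 2) := by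
    intro k
    by_cases hk : k = n
    · simp [htA, hk]
    · simp only [htA, if_neg hk]
      have hkn : (0:ℝ) < ((k:ℝ) - n) ^ 2 := by
        have : (k:ℝ) ≠ n := by exact_mod_cast fun h => hk (Nat.cast_injective h)
        have : (k:ℝ) - n ≠ 0 := fun h => this (by linarith)
        positivity
      have h1 : ‖A n k‖ ^ l ≤ 1 := pow_le_one₀ (norm_nonneg _) (hA n k)
      exact div_le_div_of_nonneg_right h1 hkn.le
  have htA0 : ∀ k, 0 ≤ tA k := by
    intro k
    by_cases hk : k = n
    · simp [htA, hk]
    · simp only [htA, if_neg hk]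
      positivity
  have hsumA : Summable tA := Summable.of_nonneg_of_le htA0 hterm hSsum.summable
  have hSA : ∑' k, tA k ≤ π ^ 2 / 3 := by
    calc ∑' k, tA k
        ≤ ∑' k : ℕ, (if k = n then (0:ℝ) else 1 / ((k : ℝ) - n) ^ 2) :=
          Summable.tsum_le_tsum hterm hsumA hSsum.summable
      _ = S := hSsum.tsum_eq
      _ ≤ π ^ 2 / 3 := hS
  have hX : 3 / π ^ 2 * ∑' k, tA k ≤ 1 := by
    have hπ2 : (0:ℝ) < π ^ 2 := by positivity
    rw [div_mul_eq_mul_div, div_le_one hπ2]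
    linarith
  constructor
  · rw [hMl]; ring
  · rw [hMl]
    have h2 : 0 ≤ c * (1 - 3 / π ^ 2 * ∑' k, tA k) :=
      mul_nonneg hc0 (by linarith)
    nlinarith [h2]
end

section
/- A function A : ℕ×ℕ → ℂ that is positive semidefinite, normalized (A(n,n) = 1 for all n) and takes values in the unit circle 𝕋 is necessarily of the form A(n,m) = e^{i(ν_n − ν_m)} for some real sequence (ν_n). -/
open Complex Finset

private lemma psd_sum_aux (A : ℕ → ℕ → ℂ)
    (hpsd : ∀ c : ℕ →₀ ℂ, ∃ r : ℝ, 0 ≤ r ∧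
      (∑ n ∈ c.support, ∑ m ∈ c.support, (starRingEnd ℂ) (c n) * A n m * c m) = r)
    (s : Finset ℕ) (f : ℕ → ℂ) :
    ∃ r : ℝ, 0 ≤ r ∧
      (∑ n ∈ s, ∑ m ∈ s, (starRingEnd ℂ) (f n) * A n m * f m) = r := by
  set c : ℕ →₀ ℂ := Finsupp.indicator s (fun n _ => f n) with hc
  obtain ⟨r, hr, hq⟩ := hpsd c
  have hsupp : c.support ⊆ s := Finsupp.support_indicator_subset _ _
  have hcf : ∀ n ∈ s, c n = f n := fun n hn => Finsupp.indicator_of_mem hn _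
  refine ⟨r, hr, ?_⟩
  rw [← hq]
  have h1 : ∀ n : ℕ, (∑ m ∈ c.support, (starRingEnd ℂ) (c n) * A n m * c m)
      = ∑ m ∈ s, (starRingEnd ℂ) (c n) * A n m * c m := by
    intro n
    refine Finset.sum_subset hsupp (fun m _ hm => ?_)
    rw [Finsupp.notMem_support_iff.mp hm, mul_zero]
  have h2 : (∑ n ∈ c.support, ∑ m ∈ c.support, (starRingEnd ℂ) (c n) * A n m * c m)
      = ∑ n ∈ s, ∑ m ∈ s, (starRingEnd ℂ) (c n) * A n m * c m := by
    rw [Finset.sum_congr rfl (fun n _ => h1 n)]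
    refine Finset.sum_subset hsupp (fun n _ hn => ?_)
    have : c n = 0 := Finsupp.notMem_support_iff.mp hn
    simp [this]
  rw [h2]
  refine Finset.sum_congr rfl (fun n hn => Finset.sum_congr rfl (fun m hm => ?_))
  rw [hcf n hn, hcf m hm]

/-- A normalized positive semidefinite matrix `A : ℕ×ℕ → ℂ` taking values in the unit
circle `𝕋` is necessarily of the form `A(n,m) = e^{i(ν_n - ν_m)}` for some real
sequence `(ν_n)`. -/
theorem stmt12 (A : ℕ → ℕ → ℂ)
    (hpsd : ∀ c : ℕ →₀ ℂ, ∃ r : ℝ, 0 ≤ r ∧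
      (∑ n ∈ c.support, ∑ m ∈ c.support, (starRingEnd ℂ) (c n) * A n m * c m) = r)
    (hnorm : ∀ n : ℕ, A n n = 1)
    (hcirc : ∀ n m : ℕ, ‖A n m‖ = 1) :
    ∃ ν : ℕ → ℝ, ∀ n m : ℕ, A n m = Complex.exp (Complex.I * ((ν n : ℂ) - (ν m : ℂ))) := by
  -- two-point positivity
  have two_pt : ∀ n m : ℕ, n ≠ m → ∀ x y : ℂ, ∃ r : ℝ, 0 ≤ r ∧
      (starRingEnd ℂ) x * A n n * x + (starRingEnd ℂ) x * A n m * y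
        + ((starRingEnd ℂ) y * A m n * x + (starRingEnd ℂ) y * A m m * y) = r := by
    intro n m hnm x y
    obtain ⟨r, hr, hq⟩ := psd_sum_aux A hpsd {n, m} (fun k => if k = n then x else y)
    refine ⟨r, hr, ?_⟩
    rw [← hq]
    rw [Finset.sum_pair hnm]
    rw [Finset.sum_pair hnm, Finset.sum_pair hnm]
    simp [hnm, Ne.symm hnm]
  -- Hermitian symmetry
  have herm : ∀ n m : ℕ, A m n = (starRingEnd ℂ) (A n m) := by
    intro n m
    rcases eq_or_ne n m with rfl | hnm
    · rw [hnorm]; simp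
    obtain ⟨r1, _, h1⟩ := two_pt n m hnm 1 1
    obtain ⟨r2, _, h2⟩ := two_pt n m hnm 1 I
    rw [hnorm, hnorm] at h1 h2
    simp only [map_one, one_mul, mul_one] at h1 h2
    have e1 := congrArg Complex.im h1
    have e2 := congrArg Complex.im h2
    simp [Complex.ext_iff] at e1 e2 ⊢
    constructor <;> linarith
  have unit : ∀ n m : ℕ, A n m * (starRingEnd ℂ) (A n m) = 1 := by
    intro n m
    rw [Complex.mul_conj, ← Complex.sq_norm, hcirc]
    norm_num
  -- key product identity
  have key : ∀ n m : ℕ, A n m = A n 0 * (starRingEnd ℂ) (A m 0) := by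
    intro n m
    rcases eq_or_ne n m with rfl | hnm
    · rw [hnorm]; exact (unit n 0).symm
    rcases eq_or_ne m 0 with rfl | hm0
    · rw [hnorm]; simp
    rcases eq_or_ne n 0 with rfl | hn0
    · rw [herm m 0, hnorm]; simp
    set a := A n 0 with ha'
    set b := A m 0 with hb'
    set X := A n m with hX'
    have ha : a * (starRingEnd ℂ) a = 1 := unit n 0
    set d : ℂ := (starRingEnd ℂ) X - b * (starRingEnd ℂ) a with hd'
    have h0n : (0:ℕ) ≠ n := Ne.symm hn0
    have h0m : (0:ℕ) ≠ m := Ne.symm hm0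
    have hdz : d = 0 := by
      by_contra hd0
      have hnsd : Complex.normSq d ≠ 0 := by simpa using hd0
      set z : ℂ := -((Complex.normSq d : ℝ) : ℂ)⁻¹ * (starRingEnd ℂ) d with hz'
      obtain ⟨r, hr, hq⟩ := psd_sum_aux A hpsd {0, n, m}
        (fun k => if k = 0 then -z * (starRingEnd ℂ) a else if k = n then z else 1)
      have hexp : ∀ g : ℕ → ℂ, ∑ k ∈ ({0, n, m} : Finset ℕ), g k = g 0 + (g n + g m) := by
        intro g
        rw [show ({0, n, m} : Finset ℕ) = insert 0 {n, m} from rfl,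
          Finset.sum_insert (by simp [h0n, h0m]), Finset.sum_pair hnm]
      rw [hexp] at hq
      simp only [hexp] at hq
      simp only [if_pos rfl, if_neg hn0, if_neg hm0, if_neg (Ne.symm hn0), if_neg (Ne.symm hm0),
        if_neg hnm, if_neg (Ne.symm hnm), eq_self_iff_true, if_true] at hq
      rw [hnorm 0, herm n 0, herm m 0, herm n m, hnorm n, hnorm m] at hq
      rw [← ha', ← hb', ← hX'] at hq
      have hQ : (1 : ℂ) + (z * d + (starRingEnd ℂ) z * (starRingEnd ℂ) d) = r := by
        simp only [map_mul, map_neg, map_one, Complex.conj_conj] at hq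
        rw [hd']
        simp only [map_sub, map_mul, Complex.conj_conj]
        linear_combination hq + (z * (starRingEnd ℂ) z) * ha
      have hzd : z * d = -1 := by
        rw [hz']
        have : (starRingEnd ℂ) d * d = ((Complex.normSq d : ℝ) : ℂ) := by
          rw [mul_comm, Complex.mul_conj]
        calc -((Complex.normSq d : ℝ) : ℂ)⁻¹ * (starRingEnd ℂ) d * d
            = -(((Complex.normSq d : ℝ) : ℂ)⁻¹ * ((starRingEnd ℂ) d * d)) := by ring
          _ = -1 := by
              rw [this, inv_mul_cancel₀ (by exact_mod_cast hnsd)]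
      have hzd' : (starRingEnd ℂ) z * (starRingEnd ℂ) d = -1 := by
        rw [← map_mul, hzd]; simp
      rw [hzd, hzd'] at hQ
      have : ((-1 : ℝ) : ℂ) = (r : ℂ) := by rw [← hQ]; norm_num
      have : (-1 : ℝ) = r := by exact_mod_cast this
      linarith
    have h1 : (starRingEnd ℂ) X = b * (starRingEnd ℂ) a := by
      have := sub_eq_zero.mp hdz
      exact this
    have h2 := congrArg (starRingEnd ℂ) h1
    simp only [map_mul, Complex.conj_conj] at h2
    rw [h2, mul_comm]
  -- conclude
  refine ⟨fun n => (A n 0).arg, fun n m => ?_⟩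
  have hexp : ∀ k : ℕ, Complex.exp ((A k 0).arg * I) = A k 0 := by
    intro k
    have := Complex.norm_mul_exp_arg_mul_I (A k 0)
    rwa [hcirc, Complex.ofReal_one, one_mul] at this
  have hinv : (starRingEnd ℂ) (A m 0) = (A m 0)⁻¹ :=
    eq_inv_of_mul_eq_one_left (by rw [mul_comm]; exact unit m 0)
  rw [key n m, hinv, mul_sub, Complex.exp_sub, ← hexp n, ← hexp m]
  rw [mul_comm I ((A n 0).arg : ℂ), mul_comm I ((A m 0).arg : ℂ)]
  rw [div_eq_mul_inv]
end

section
/- If A : ℕ×ℕ → ℂ satisfies lim_{n→∞} (π/√3)^l (1 − (3/π²) Σ_{k≠n} |A(n,k)|^l/(k−n)²) = 0 for some l ≥ 1 with |A(n,m)| ≤ 1 for all n,m, then lim_{n→∞} (π/√3)^{l'} (1 − (3/π²) Σ_{k≠n} |A(n,k)|^{l'}/(k−n)²) = 0 for every l' ≥ 1. -/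
open Real Filter Topology

private lemma aux_one_sub_pow {x : ℝ} (hx0 : 0 ≤ x) (hx1 : x ≤ 1) (m : ℕ) :
    1 - x ^ m ≤ m * (1 - x) := by
  induction m with
  | zero => simp
  | succ m ih =>
    have hxm : x ^ m ≤ 1 := pow_le_one₀ hx0 hx1
    have h2 : x * (1 - x ^ m) ≤ 1 * (1 - x ^ m) :=
      mul_le_mul_of_nonneg_right hx1 (by linarith)
    have h3 : x * (1 - x ^ m) = x - x ^ (m + 1) := by rw [pow_succ]; ring
    push_cast
    linarith

/-- If for some `l ≥ 1` the noise numbers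
`(π/√3)^l (1 - (3/π²) ∑_{k ≠ n} |A(n,k)|^l/(k-n)²)` tend to `0` as `n → ∞`, then the
same holds for every `l' ≥ 1`. -/
theorem stmt18 (A : ℕ → ℕ → ℂ) (hA : ∀ n m, ‖A n m‖ ≤ 1)
    (l : ℕ) (hl : 1 ≤ l)
    (h : Tendsto
      (fun n : ℕ => (π / Real.sqrt 3) ^ l *
        (1 - 3 / π ^ 2 *
          ∑' k : ℕ, (if k = n then (0:ℝ) else ‖A n k‖ ^ l / ((k : ℝ) - n) ^ 2)))
      atTop (𝓝 0)) :
    ∀ l' : ℕ, 1 ≤ l' →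
      Tendsto
        (fun n : ℕ => (π / Real.sqrt 3) ^ l' *
          (1 - 3 / π ^ 2 *
            ∑' k : ℕ, (if k = n then (0:ℝ) else ‖A n k‖ ^ l' / ((k : ℝ) - n) ^ 2)))
        atTop (𝓝 0) := by
  intro l' hl'
  have hπ : (0:ℝ) < π := Real.pi_pos
  set c : ℝ := π / Real.sqrt 3 with hc
  have hc0 : 0 < c := div_pos hπ (Real.sqrt_pos.2 (by norm_num))
  set t : ℕ → ℕ → ℝ := fun n k => if k = n then 0 else 1 / ((k : ℝ) - n) ^ 2 with ht
  set s : ℕ → ℕ → ℕ → ℝ :=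
    fun m n k => if k = n then 0 else ‖A n k‖ ^ m / ((k : ℝ) - n) ^ 2 with hs
  have hbase : Summable (fun k : ℕ => 1 / (k : ℝ) ^ 2) := hasSum_zeta_two.summable
  have hksq : ∀ {n k : ℕ}, k ≠ n → (0:ℝ) < ((k : ℝ) - n) ^ 2 := by
    intro n k hk
    have : ((k : ℝ) - n) ≠ 0 := sub_ne_zero.2 (by exact_mod_cast hk)
    positivity
  -- summability of t n
  have hsumT : ∀ n, Summable (t n) := by
    intro n
    refine (summable_nat_add_iff (n + 1)).1 ?_
    have heq : (fun k : ℕ => t n (k + (n + 1))) = fun k : ℕ => 1 / ((k : ℝ) + 1) ^ 2 := by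
      funext k
      have hk : k + (n + 1) ≠ n := by omega
      simp only [ht, if_neg hk]
      push_cast
      ring_nf
    rw [heq]
    have := (summable_nat_add_iff 1).2 hbase
    simpa using this
  -- pointwise bounds
  have hs_nonneg : ∀ m n k, 0 ≤ s m n k := by
    intro m n k
    simp only [hs]
    split
    · exact le_rfl
    · positivity
  have hst : ∀ m n k, s m n k ≤ t n k := by
    intro m n k
    simp only [hs, ht]
    split
    · exact le_rfl
    · rename_i hk
      exact (div_le_div_iff_of_pos_right (hksq hk)).2
        (pow_le_one₀ (norm_nonneg _) (hA n k))
  have hsumS : ∀ m n, Summable (s m n) := fun m n =>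
    Summable.of_nonneg_of_le (hs_nonneg m n) (hst m n) (hsumT n)
  -- the full series bound : ∑' t n ≤ π²/3
  have hzeta : ∑' k : ℕ, 1 / (k : ℝ) ^ 2 = π ^ 2 / 6 := hasSum_zeta_two.tsum_eq
  have hT_le : ∀ n, ∑' k, t n k ≤ π ^ 2 / 3 := by
    intro n
    have hsplit := Summable.sum_add_tsum_nat_add (f := t n) (n + 1) (hsumT n)
    -- tail
    have htail : (fun k : ℕ => t n (k + (n + 1))) = fun k : ℕ => 1 / ((k : ℝ) + 1) ^ 2 := by
      funext k
      have hk : k + (n + 1) ≠ n := by omega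
      simp only [ht, if_neg hk]
      push_cast
      ring_nf
    have htail_val : ∑' k : ℕ, t n (k + (n + 1)) = π ^ 2 / 6 := by
      rw [htail]
      have h0 : ∑' k : ℕ, 1 / (k : ℝ) ^ 2 =
          1 / ((0:ℕ) : ℝ) ^ 2 + ∑' k : ℕ, 1 / ((k + 1 : ℕ) : ℝ) ^ 2 :=
        Summable.tsum_eq_zero_add hbase
      have : ∑' k : ℕ, 1 / ((k : ℝ) + 1) ^ 2 = π ^ 2 / 6 := by
        rw [← hzeta, h0]
        push_cast
        simp
      exact this
    -- head
    have hhead : ∑ k ∈ Finset.range (n + 1), t n k =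
        ∑ k ∈ Finset.range (n + 1), 1 / (k : ℝ) ^ 2 := by
      rw [← Finset.sum_range_reflect]
      refine Finset.sum_congr rfl ?_
      intro k hk
      have hkn : k ≤ n := by
        simpa using Nat.lt_succ_iff.1 (Finset.mem_range.1 hk)
      simp only [Nat.add_sub_cancel]
      rcases Nat.eq_zero_or_pos k with hk0 | hk0
      · subst hk0
        simp [ht]
      · have hne : n - k ≠ n := by omega
        simp only [ht, if_neg hne]
        rw [Nat.cast_sub hkn]
        ring_nf
    have hhead_le : ∑ k ∈ Finset.range (n + 1), 1 / (k : ℝ) ^ 2 ≤ π ^ 2 / 6 := by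
      rw [← hzeta]
      exact Summable.sum_le_tsum _ (fun k _ => by positivity) hbase
    nlinarith [hsplit, htail_val, hhead, hhead_le]
  have hS_le_T : ∀ m n, ∑' k, s m n k ≤ ∑' k, t n k := fun m n =>
    Summable.tsum_le_tsum (hst m n) (hsumS m n) (hsumT n)
  -- key comparison between moment orders
  have hkey : ∀ n, ∑' k, t n k - ∑' k, s l' n k ≤ l' * (∑' k, t n k - ∑' k, s l n k) := by
    intro n
    have h1 : ∑' k, t n k - ∑' k, s l' n k = ∑' k, (t n k - s l' n k) :=
      (Summable.tsum_sub (hsumT n) (hsumS l' n)).symm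
    have h2 : ∑' k, t n k - ∑' k, s l n k = ∑' k, (t n k - s l n k) :=
      (Summable.tsum_sub (hsumT n) (hsumS l n)).symm
    rw [h1, h2, ← tsum_mul_left]
    refine Summable.tsum_le_tsum ?_ ((hsumT n).sub (hsumS l' n))
      (((hsumT n).sub (hsumS l n)).mul_left _)
    intro k
    by_cases hk : k = n
    · simp [ht, hs, hk]
    · simp only [ht, hs, if_neg hk]
      have ha0 : 0 ≤ ‖A n k‖ := norm_nonneg _
      have ha1 : ‖A n k‖ ≤ 1 := hA n k
      set a := ‖A n k‖
      have hal : a ^ l ≤ a := by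
        calc a ^ l ≤ a ^ 1 := pow_le_pow_of_le_one ha0 ha1 hl
        _ = a := pow_one a
      have key : 1 - a ^ l' ≤ l' * (1 - a ^ l) := by
        have := aux_one_sub_pow ha0 ha1 l'
        have hl'1 : (1:ℝ) ≤ l' := by exact_mod_cast hl'
        nlinarith
      have hd := hksq hk
      rw [div_sub_div_same, div_sub_div_same, ← mul_div_assoc]
      gcongr
  -- abbreviations for the noise numbers
  set f : ℕ → ℕ → ℝ := fun m n => c ^ m * (1 - 3 / π ^ 2 * ∑' k, s m n k) with hf
  have hπ2 : (0:ℝ) < 3 / π ^ 2 := by positivity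
  have h_nonneg : ∀ m n, 0 ≤ f m n := by
    intro m n
    have h1 : ∑' k, s m n k ≤ π ^ 2 / 3 := (hS_le_T m n).trans (hT_le n)
    have h2 : 3 / π ^ 2 * ∑' k, s m n k ≤ 3 / π ^ 2 * (π ^ 2 / 3) :=
      mul_le_mul_of_nonneg_left h1 (le_of_lt hπ2)
    have h3 : 3 / π ^ 2 * (π ^ 2 / 3) = 1 := by
      field_simp
    have : 0 ≤ 1 - 3 / π ^ 2 * ∑' k, s m n k := by
      rw [← h3] at *; linarith
    positivity
  -- the key bound : f l' n ≤ C * f l n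
  set C : ℝ := (1 + l') * c ^ l' / c ^ l with hC
  have hbound : ∀ n, f l' n ≤ C * f l n := by
    intro n
    have hT := hT_le n
    have hSl := hS_le_T l n
    have hSl' := hS_le_T l' n
    have hk := hkey n
    have hl'0 : (0:ℝ) ≤ l' := by positivity
    have hq : 1 - 3 / π ^ 2 * ∑' k, s l' n k ≤
        (1 + l') * (1 - 3 / π ^ 2 * ∑' k, s l n k) := by
      have e1 : 3 / π ^ 2 * (∑' k, t n k - ∑' k, s l n k) ≤
          1 - 3 / π ^ 2 * ∑' k, s l n k := by
        have : 3 / π ^ 2 * ∑' k, t n k ≤ 3 / π ^ 2 * (π ^ 2 / 3) :=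
          mul_le_mul_of_nonneg_left hT (le_of_lt hπ2)
        have h3 : 3 / π ^ 2 * (π ^ 2 / 3) = 1 := by field_simp
        rw [h3] at this
        nlinarith
      have e2 : 1 - 3 / π ^ 2 * ∑' k, t n k ≤ 1 - 3 / π ^ 2 * ∑' k, s l n k := by
        nlinarith
      have e3 : 3 / π ^ 2 * (∑' k, t n k - ∑' k, s l' n k) ≤
          (l' : ℝ) * (3 / π ^ 2 * (∑' k, t n k - ∑' k, s l n k)) := by
        have := mul_le_mul_of_nonneg_left hk (le_of_lt hπ2)
        nlinarith
      have e4 : (l' : ℝ) * (3 / π ^ 2 * (∑' k, t n k - ∑' k, s l n k)) ≤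
          (l' : ℝ) * (1 - 3 / π ^ 2 * ∑' k, s l n k) :=
        mul_le_mul_of_nonneg_left e1 hl'0
      nlinarith
    have hcl' : (0:ℝ) ≤ c ^ l' := by positivity
    have hcll : c ^ l ≠ 0 := by positivity
    calc f l' n = c ^ l' * (1 - 3 / π ^ 2 * ∑' k, s l' n k) := rfl
      _ ≤ c ^ l' * ((1 + l') * (1 - 3 / π ^ 2 * ∑' k, s l n k)) :=
          mul_le_mul_of_nonneg_left hq hcl'
      _ = C * f l n := by
          simp only [hf, hC]
          field_simp
  -- conclude by squeezing
  have hCf : Tendsto (fun n => C * f l n) atTop (𝓝 0) := by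
    have := h.const_mul C
    simpa using this
  exact squeeze_zero (fun n => h_nonneg l' n) hbound hCf
end
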